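/- Fix a positive integer m. Then the quotient [ Σ_{k=0}^{m} (k!)² · S(n+1, k+1) · S(m+1, k+1) ] / [ m! · (m+1)^n ] tends to 1 as n → ∞, where S(a,b) denotes the Stirling number of the second kind. (The numerator is the poly-Bernoulli number B_n^{(−m)}.) -/

import Mathlib

/-- Stirling numbers of the second kind: `stirling2 n k` is the number of
partitions of an `n`-element set into `k` nonempty blocks. -/
def stirling2 : ℕ → ℕ → ℕ
  | 0, 0 => 1
  | 0, _+1 => 0
  | _+1, 0 => 0
  | n+1, k+1 => (k + 1) * stirling2 n (k + 1) + stirling2 n k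


lemma stirling2_eq_zero : ∀ n k, n < k → stirling2 n k = 0 := by
  intro n
  induction n with
  | zero => intro k hk; match k, hk with | k+1, _ => rfl
  | succ n ih =>
    intro k hk
    match k, hk with
    | k+1, hk =>
      have h1 : stirling2 n (k+1) = 0 := ih _ (by omega)
      have h2 : stirling2 n k = 0 := ih _ (by omega)
      simp [stirling2, h1, h2]

lemma stirling2_self : ∀ n, stirling2 n n = 1 := by
  intro n
  induction n with
  | zero => rfl
  | succ n ih =>
    simp [stirling2, ih, stirling2_eq_zero n (n+1) (by omega)]

lemma stirling2_formula (n : ℕ) : ∀ k,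
    (k.factorial : ℤ) * stirling2 n k =
      ∑ i ∈ Finset.range (k+1), (-1 : ℤ)^i * (k.choose i) * ((k : ℤ) - i)^n := by
  induction n with
  | zero =>
    intro k
    cases k with
    | zero => simp [stirling2]
    | succ k =>
      simp only [stirling2, Nat.cast_zero, mul_zero, pow_zero, mul_one]
      rw [Int.alternating_sum_range_choose]
      simp
  | succ n ih =>
    intro k
    cases k with
    | zero => simp [stirling2]
    | succ k =>
      have hrec : ((k+1).factorial : ℤ) * stirling2 (n+1) (k+1)
          = (k+1) * ((k+1).factorial * stirling2 n (k+1)) + (k+1) * (k.factorial * stirling2 n k) := by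
        show ((k+1).factorial : ℤ) * ((k + 1) * stirling2 n (k + 1) + stirling2 n k) = _
        push_cast [Nat.factorial_succ]
        ring
      rw [hrec, ih (k+1), ih k]
      -- key combinatorial identity
      have step1 : ∑ i ∈ Finset.range (k+1+1), (-1 : ℤ)^i * ((k+1).choose i) * ((k+1 : ℤ) - i)^(n+1)
          = ∑ i ∈ Finset.range (k+1+1),
              ((k+1 : ℤ) * ((-1)^i * ((k+1).choose i) * ((k+1 : ℤ) - i)^n)
                + (-1)^(i+1) * ((i * (k+1).choose i : ℕ) : ℤ) * ((k+1 : ℤ) - i)^n) := by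
        refine Finset.sum_congr rfl fun i _ => ?_
        push_cast
        rw [pow_succ]
        ring
      push_cast
      rw [step1, Finset.sum_add_distrib, ← Finset.mul_sum]
      congr 1
      conv_rhs => rw [Finset.sum_range_succ']
      have hz : (-1 : ℤ)^(0+1) * ((0 * (k+1).choose 0 : ℕ) : ℤ) * ((k : ℤ) + 1 - (0:ℕ))^n = 0 := by
        simp
      rw [hz, add_zero, Finset.mul_sum]
      refine Finset.sum_congr rfl fun i _ => ?_
      have hc : (i+1) * (k+1).choose (i+1) = (k+1) * k.choose i := by
        rw [mul_comm (i+1)]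
        exact (Nat.add_one_mul_choose_eq k i).symm
      have : ((k+1 : ℤ) - (i+1)) = ((k : ℤ) - i) := by ring
      rw [hc]
      push_cast
      rw [this]
      ring

open Filter Finset

/-- For fixed `m ≥ 1`, the poly-Bernoulli number
`B_n^{(-m)} = Σ_{k=0}^{m} (k!)² S(n+1,k+1) S(m+1,k+1)` is asymptotic to
`m! (m+1)^n` as `n → ∞`. -/
theorem polyBernoulli_asymptotic (m : ℕ) (hm : 0 < m) :
    Filter.Tendsto
      (fun n : ℕ =>
        ((∑ k ∈ Finset.range (m + 1),
            k.factorial ^ 2 * stirling2 (n + 1) (k + 1) * stirling2 (m + 1) (k + 1) : ℕ) : ℝ) /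
          (m.factorial * (m + 1 : ℝ) ^ n))
      Filter.atTop (nhds 1) := by
  have hm1 : ((m:ℝ)+1) ≠ 0 := by positivity
  have hfact : ∀ j : ℕ, ((j.factorial : ℝ)) ≠ 0 := fun j =>
    Nat.cast_ne_zero.mpr j.factorial_ne_zero
  set a : ℕ → ℕ → ℝ := fun k i =>
    ((k.factorial : ℝ)^2 * (stirling2 (m+1) (k+1) : ℝ) * (-1)^i * ((k+1).choose i) *
      ((k:ℝ)+1-i)) / (((k+1).factorial : ℝ) * (m.factorial : ℝ)) with ha
  set r : ℕ → ℕ → ℝ := fun k i => ((k:ℝ)+1-(i:ℝ))/((m:ℝ)+1) with hr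
  suffices h : Tendsto (fun n : ℕ => ∑ k ∈ range (m+1), ∑ i ∈ range (k+2), a k i * (r k i)^n)
      atTop (nhds 1) by
    refine h.congr fun n => ?_
    symm
    rw [Nat.cast_sum, Finset.sum_div]
    refine Finset.sum_congr rfl fun k hk => ?_
    have h := stirling2_formula (n+1) (k+1)
    push_cast at h
    have hS : ((stirling2 (n+1) (k+1) : ℕ) : ℝ) =
        (∑ i ∈ Finset.range (k+2), (-1:ℝ)^i * (((k+1).choose i : ℕ) : ℝ) *
          ((k:ℝ)+1 - i)^(n+1)) / (((k+1).factorial : ℝ)) := by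
      rw [eq_div_iff (hfact (k+1)), mul_comm]
      exact_mod_cast h
    have hterm : ∀ i ∈ range (k+2), a k i * (r k i)^n =
        ((-1:ℝ)^i * (((k+1).choose i : ℕ) : ℝ) * ((k:ℝ)+1 - i)^(n+1)) *
          ((k.factorial:ℝ)^2 * (stirling2 (m+1) (k+1) : ℝ) /
            (((k+1).factorial:ℝ) * (m.factorial:ℝ) * ((m:ℝ)+1)^n)) := fun i _ => by
      simp only [ha, hr]
      rw [div_pow, pow_succ]
      ring
    rw [Finset.sum_congr rfl hterm, ← Finset.sum_mul]
    push_cast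
    rw [hS]
    ring
  have hsum : ∑ k ∈ range (m+1), ∑ i ∈ range (k+2),
      (if k = m ∧ i = 0 then (1:ℝ) else 0) = 1 := by
    have hinner : ∀ k ∈ range (m+1), (∑ i ∈ range (k+2),
        (if k = m ∧ i = 0 then (1:ℝ) else 0)) = if k = m then 1 else 0 := by
      intro k _
      by_cases h : k = m <;> simp [h]
    rw [Finset.sum_congr rfl hinner]
    simp
  rw [← hsum]
  refine tendsto_finset_sum _ fun k hk => tendsto_finset_sum _ fun i hi => ?_
  by_cases hki : k = m ∧ i = 0
  · obtain ⟨rfl, rfl⟩ := hki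
    have hr1 : r k 0 = 1 := by
      simp only [hr, Nat.cast_zero, sub_zero]
      exact div_self hm1
    have ha1 : a k 0 = 1 := by
      simp only [ha, Nat.cast_zero, sub_zero, pow_zero, mul_one, Nat.choose_zero_right,
        Nat.cast_one, stirling2_self, Nat.factorial_succ]
      push_cast
      field_simp
    simp only [hr1, ha1, one_mul, one_pow, if_pos (And.intro rfl rfl)]
    exact tendsto_const_nhds
  · rw [if_neg hki]
    have hik : i ≤ k + 1 := by simpa [Nat.lt_succ_iff] using Finset.mem_range.mp hi
    have hkm : k ≤ m := by simpa [Nat.lt_succ_iff] using Finset.mem_range.mp hk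
    have h0 : 0 ≤ r k i := by
      apply div_nonneg _ (by positivity)
      have : (i:ℝ) ≤ (k:ℝ) + 1 := by exact_mod_cast hik
      linarith
    have h1 : r k i < 1 := by
      rw [div_lt_one (by positivity)]
      have : k < m + i := by omega
      have : (k:ℝ) < (m:ℝ) + (i:ℝ) := by exact_mod_cast this
      linarith
    have := (tendsto_pow_atTop_nhds_zero_of_lt_one h0 h1).const_mul (a k i)
    simpa using this
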